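/- Let J : {seminorms on ℝ²} → [0,∞) be monotone, homogeneous of degree 2, SL₂-invariant, and continuous. If a seminorm s on ℝ² is not a norm (i.e. s(v) = 0 for some v ≠ 0), then J(s) = 0. -/

import Mathlib

open Matrix MeasureTheory Real

noncomputable section

/-- The Euclidean plane. -/
abbrev E2 := EuclideanSpace ℝ (Fin 2)

/-- `SL(2,ℝ)` as matrices of determinant one. -/
abbrev SL2 := Matrix.SpecialLinearGroup (Fin 2) ℝ

/-- The seminorm `v ↦ s (M v)`, i.e. `s ∘ M`. -/
def compM (s : Seminorm ℝ E2) (M : Matrix (Fin 2) (Fin 2) ℝ) : Seminorm ℝ E2 :=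
  s.comp (Matrix.toEuclideanLin M)

/-- A seminorm is a norm iff it is positive away from the origin. -/
def IsNorm (s : Seminorm ℝ E2) : Prop := ∀ v : E2, v ≠ 0 → 0 < s v

/-- Monotonicity of a functional on seminorms. -/
def Monot (J : Seminorm ℝ E2 → ℝ) : Prop := ∀ s s' : Seminorm ℝ E2, s' ≤ s → J s' ≤ J s

/-- Degree 2 homogeneity of a functional on seminorms. -/
def Homog (J : Seminorm ℝ E2 → ℝ) : Prop :=
  ∀ (c : NNReal) (s : Seminorm ℝ E2), J (c • s) = (c : ℝ) ^ 2 * J s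

/-- `SL₂`-invariance of a functional on seminorms. -/
def SL2inv (J : Seminorm ℝ E2 → ℝ) : Prop :=
  ∀ (s : Seminorm ℝ E2) (T : SL2), J (compM s (T : Matrix (Fin 2) (Fin 2) ℝ)) = J s

/-- The Reshetnyak energy `I²₊(s) = max_{v ∈ S¹} s(v)²`. -/
def Iplus (s : Seminorm ℝ E2) : ℝ := ⨆ v : Metric.sphere (0 : E2) 1, (s (v : E2)) ^ 2

/-- The unit ball of a seminorm. -/
def unitBallS (s : Seminorm ℝ E2) : Set E2 := {v | s v ≤ 1}

/-- The ellipse `M(D̄)` is inscribed in the unit ball of `s`. -/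
def ellipseIn (s : Seminorm ℝ E2) (M : Matrix (Fin 2) (Fin 2) ℝ) : Prop :=
  (Matrix.toEuclideanLin M) '' (Metric.closedBall 0 1) ⊆ unitBallS s

/-- The area of the largest ellipse inscribed in the unit ball of `s`
(the area of the Loewner ellipse); the ellipse `M(D̄)` has area `π |det M|`. -/
def LoewnerArea (s : Seminorm ℝ E2) : ℝ :=
  sSup {a : ℝ | ∃ M : Matrix (Fin 2) (Fin 2) ℝ, ellipseIn s M ∧ a = π * |M.det|}

/-- The inscribed Riemannian (Ivanov) Jacobian `J^i(s) = π / |L|`. -/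
def Ji (s : Seminorm ℝ E2) : ℝ := π / LoewnerArea s

/-- `s` is isotropic: some round disc `t·D̄` is inscribed in the unit ball of `s` and has at
least the area of every inscribed ellipse, i.e. the Loewner ellipse is a round disc. -/
def Isotropic (s : Seminorm ℝ E2) : Prop :=
  ∃ t : ℝ, 0 < t ∧ Metric.closedBall (0 : E2) t ⊆ unitBallS s ∧
    ∀ M : Matrix (Fin 2) (Fin 2) ℝ, ellipseIn s M → π * |M.det| ≤ π * t ^ 2

/-- A Jacobian (definition of area): monotone, degree-2 homogeneous, `SL₂`-invariant,
normalized on the Euclidean norm. -/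
def IsJacobian (J : Seminorm ℝ E2 → ℝ) : Prop :=
  (∀ s, 0 ≤ J s) ∧ Monot J ∧ Homog J ∧ SL2inv J ∧ J (normSeminorm ℝ E2) = 1

/-- A monotone, degree-2 homogeneous, `SL₂`-invariant, continuous functional vanishes on
every seminorm which is not a norm. -/
theorem stmt3 (J : Seminorm ℝ E2 → ℝ) (hpos : ∀ s, 0 ≤ J s)
    (hmon : Monot J) (hhom : Homog J) (hinv : SL2inv J)
    (hcont : ∀ s : Seminorm ℝ E2, ∀ ε > (0 : ℝ), ∃ δ > (0 : ℝ), ∀ s' : Seminorm ℝ E2,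
      (∀ v : E2, ‖v‖ = 1 → |s' v - s v| ≤ δ) → |J s' - J s| ≤ ε)
    (s : Seminorm ℝ E2) (hdeg : ∃ v : E2, v ≠ 0 ∧ s v = 0) :
    J s = 0 := by
  obtain ⟨v, hv, hs⟩ := hdeg
  set a := v 0 with ha
  set b := v 1 with hb
  have hab : a ≠ 0 ∨ b ≠ 0 := by
    by_contra h
    push_neg at h
    exact hv (by ext i; fin_cases i <;> simp [← ha, ← hb, h.1, h.2])
  have hC : 0 < a ^ 2 + b ^ 2 := by
    rcases hab with h | h
    · nlinarith [mul_self_pos.mpr h, sq_nonneg b]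
    · nlinarith [mul_self_pos.mpr h, sq_nonneg a]
  set C := a ^ 2 + b ^ 2 with hCdef
  set u : E2 := (WithLp.equiv 2 (Fin 2 → ℝ)).symm ![-b, a] with hu
  have hsu : 0 ≤ s u := apply_nonneg s u
  have hJ0 : J (0 : Seminorm ℝ E2) = 0 := by
    have h := hhom 0 s
    have h0 : (0 : NNReal) • s = (0 : Seminorm ℝ E2) := by
      ext x; simp
    rw [h0] at h
    simpa using h
  have hmain : ∀ ε > (0 : ℝ), |J s| ≤ ε := by
    intro ε hε
    obtain ⟨δ, hδ, hP⟩ := hcont 0 ε hε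
    set t : ℝ := (s u + 1) / (δ * C) with htdef
    have htpos : (0:ℝ) < t := by positivity
    set M : Matrix (Fin 2) (Fin 2) ℝ := !![t*a, -b/(t*C); t*b, a/(t*C)] with hM
    have hdet : M.det = 1 := by
      rw [hM, Matrix.det_fin_two_of]
      field_simp
      ring
    have hkey : ∀ w : E2, ‖w‖ = 1 → (compM s M) w ≤ s u / (t * C) := by
      intro w hw
      have hrep : (Matrix.toEuclideanLin M) w = (t * w 0) • v + (w 1 / (t*C)) • u := by
        ext i
        fin_cases i <;>
          simp [Matrix.toEuclideanLin_apply, Matrix.mulVec, dotProduct,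
            Fin.sum_univ_two, hM, hu, ← ha, ← hb] <;> ring
      have hw1 : |w 1| ≤ 1 := by
        have h1 : ‖w‖ ^ 2 = (w 0) ^ 2 + (w 1) ^ 2 := by
          rw [EuclideanSpace.norm_eq]
          rw [Real.sq_sqrt (by positivity)]
          simp [Fin.sum_univ_two, sq_abs]
        nlinarith [sq_nonneg (w 0), abs_nonneg (w 1), sq_abs (w 1)]
      calc (compM s M) w = s ((t * w 0) • v + (w 1 / (t*C)) • u) := by
              simp [compM, Seminorm.comp_apply, hrep]
        _ ≤ s ((t * w 0) • v) + s ((w 1 / (t*C)) • u) := map_add_le_add s _ _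
        _ = |w 1| / (t*C) * s u := by
              rw [map_smul_eq_mul, map_smul_eq_mul, hs, Real.norm_eq_abs, Real.norm_eq_abs,
                abs_div, abs_of_pos (by positivity : (0:ℝ) < t*C)]; ring
        _ ≤ 1 / (t*C) * s u := by
              apply mul_le_mul_of_nonneg_right _ hsu
              apply div_le_div_of_nonneg_right ?_ (by positivity)
              exact hw1
        _ = s u / (t*C) := by ring
    have htC : t * C = (s u + 1) / δ := by
      rw [htdef]; field_simp
    have hbound : s u / (t * C) ≤ δ := by
      rw [htC, div_div_eq_mul_div, div_le_iff₀ (by positivity : (0:ℝ) < s u + 1)]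
      nlinarith
    have hclose : ∀ w : E2, ‖w‖ = 1 → |(compM s M) w - (0 : Seminorm ℝ E2) w| ≤ δ := by
      intro w hw
      rw [Seminorm.zero_apply, sub_zero, abs_of_nonneg (apply_nonneg _ _)]
      exact (hkey w hw).trans hbound
    have hJeq : J (compM s M) = J s := hinv s ⟨M, hdet⟩
    have h := hP (compM s M) hclose
    rwa [hJeq, hJ0, sub_zero] at h
  by_contra h
  have h' : 0 < J s := (hpos s).lt_of_ne (Ne.symm h)
  have := hmain (J s / 2) (by linarith)
  rw [abs_of_pos h'] at this
  linarith
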